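/- arXiv:2207.12484 — 2 statements merged into one kernel-verified Lean document; each statement's English description precedes it below -/
import Mathlib

section
/- (Corollary 3, item 3.) Let Σ be a p×p symmetric positive definite real matrix (indexed by pairs) and let a > 0. If K minimizes d(K' : Σ) over all separable positive definite p×p matrices K', then a·K is separable positive definite and minimizes d(K' : a·Σ) over all separable positive definite p×p matrices K'. -/
open Matrix BigOperators Filter Kronecker

/-- The separable (Kronecker) product `M2 ⊛ M1`: entry at `((i,j),(i',j'))` is
`M1 i i' * M2 j j'`. -/
noncomputable def sep {p1 p2 : ℕ} (M1 : Matrix (Fin p1) (Fin p1) ℝ)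
    (M2 : Matrix (Fin p2) (Fin p2) ℝ) :
    Matrix (Fin p1 × Fin p2) (Fin p1 × Fin p2) ℝ :=
  fun x y => M1 x.1 y.1 * M2 x.2 y.2

/-- A `p × p` matrix is separable positive definite if it is the separable product of
two symmetric positive definite matrices. -/
def SepPD {p1 p2 : ℕ} (K : Matrix (Fin p1 × Fin p2) (Fin p1 × Fin p2) ℝ) : Prop :=
  ∃ (S1 : Matrix (Fin p1) (Fin p1) ℝ) (S2 : Matrix (Fin p2) (Fin p2) ℝ),
    S1.PosDef ∧ S2.PosDef ∧ K = sep S1 S2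

/-- The divergence `d(K : S) = log det K + trace (K⁻¹ S)`. -/
noncomputable def dvg {ι : Type*} [Fintype ι] [DecidableEq ι] (K S : Matrix ι ι ℝ) : ℝ :=
  Real.log K.det + (K⁻¹ * S).trace

/-- `P1 S B` has entries `∑_{j,j'} B j j' * S (i,j) (i',j')`. -/
noncomputable def P1 {p1 p2 : ℕ} (S : Matrix (Fin p1 × Fin p2) (Fin p1 × Fin p2) ℝ)
    (B : Matrix (Fin p2) (Fin p2) ℝ) : Matrix (Fin p1) (Fin p1) ℝ :=
  fun i i' => ∑ j, ∑ j', B j j' * S (i, j) (i', j')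

/-- `P2 S A` has entries `∑_{i,i'} A i i' * S (i,j) (i',j')`. -/
noncomputable def P2 {p1 p2 : ℕ} (S : Matrix (Fin p1 × Fin p2) (Fin p1 × Fin p2) ℝ)
    (A : Matrix (Fin p1) (Fin p1) ℝ) : Matrix (Fin p2) (Fin p2) ℝ :=
  fun j j' => ∑ i, ∑ i', A i i' * S (i, j) (i', j')

lemma posdef_smul {n : ℕ} {M : Matrix (Fin n) (Fin n) ℝ} (hM : M.PosDef)
    {c : ℝ} (hc : 0 < c) : (c • M).PosDef := by
  refine ⟨?_, fun x hx => ?_⟩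
  · unfold Matrix.IsHermitian
    rw [Matrix.conjTranspose_smul, hM.1.eq]
    simp
  · have := hM.2 hx
    simp only [Matrix.smul_apply, smul_eq_mul]
    have e : (x.sum fun i xi => x.sum fun j xj => star xi * (c * M i j) * xj) =
        c * (x.sum fun i xi => x.sum fun j xj => star xi * M i j * xj) := by
      unfold Finsupp.sum
      rw [Finset.mul_sum]
      refine Finset.sum_congr rfl fun i _ => ?_
      rw [Finset.mul_sum]
      refine Finset.sum_congr rfl fun j _ => ?_
      ring
    rw [e]
    positivity

lemma sep_eq_kron {p1 p2 : ℕ} (M1 : Matrix (Fin p1) (Fin p1) ℝ)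
    (M2 : Matrix (Fin p2) (Fin p2) ℝ) : sep M1 M2 = M1 ⊗ₖ M2 := by
  ext ⟨i, j⟩ ⟨i', j'⟩
  rfl

lemma sepPD_det_pos {p1 p2 : ℕ} {K : Matrix (Fin p1 × Fin p2) (Fin p1 × Fin p2) ℝ}
    (h : SepPD K) : 0 < K.det := by
  obtain ⟨S1, S2, h1, h2, rfl⟩ := h
  rw [sep_eq_kron, Matrix.det_kronecker]
  exact mul_pos (pow_pos h1.det_pos _) (pow_pos h2.det_pos _)

lemma sepPD_smul {p1 p2 : ℕ} {K : Matrix (Fin p1 × Fin p2) (Fin p1 × Fin p2) ℝ}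
    (h : SepPD K) {c : ℝ} (hc : 0 < c) : SepPD (c • K) := by
  obtain ⟨S1, S2, h1, h2, rfl⟩ := h
  refine ⟨c • S1, S2, posdef_smul h1 hc, h2, ?_⟩
  ext ⟨i, j⟩ ⟨i', j'⟩
  simp [sep, mul_assoc]

lemma dvg_smul {ι : Type*} [Fintype ι] [DecidableEq ι] {M : Matrix ι ι ℝ}
    (hM : IsUnit M.det) (hMd : 0 < M.det) (S : Matrix ι ι ℝ) {c : ℝ} (hc : 0 < c) :
    dvg (c • M) (c • S) = (Fintype.card ι : ℝ) * Real.log c + dvg M S := by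
  have hinv : (c • M)⁻¹ = c⁻¹ • M⁻¹ := by
    have : Invertible c := invertibleOfNonzero hc.ne'
    rw [M.inv_smul c hM, invOf_eq_inv]
  unfold dvg
  rw [hinv, Matrix.det_smul, Matrix.smul_mul, Matrix.mul_smul, smul_smul,
    inv_mul_cancel₀ hc.ne', one_smul,
    Real.log_mul (by positivity) hMd.ne', Real.log_pow]
  ring

theorem stmt7 (p1 p2 : ℕ) (hp1 : 0 < p1) (hp2 : 0 < p2)
    (S : Matrix (Fin p1 × Fin p2) (Fin p1 × Fin p2) ℝ) (hS : S.PosDef)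
    (a : ℝ) (ha : 0 < a)
    (K : Matrix (Fin p1 × Fin p2) (Fin p1 × Fin p2) ℝ) (hKsep : SepPD K)
    (hmin : ∀ K', SepPD K' → dvg K S ≤ dvg K' S) :
    SepPD (a • K) ∧ ∀ K', SepPD K' → dvg (a • K) (a • S) ≤ dvg K' (a • S) := by
  refine ⟨sepPD_smul hKsep ha, fun K' hK' => ?_⟩
  have hK'' : SepPD (a⁻¹ • K') := sepPD_smul hK' (by positivity)
  have hd K₀ (h : SepPD K₀) : dvg (a • K₀) (a • S) =
      (Fintype.card (Fin p1 × Fin p2) : ℝ) * Real.log a + dvg K₀ S :=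
    dvg_smul (sepPD_det_pos h).ne'.isUnit (sepPD_det_pos h) S ha
  have hre : a • (a⁻¹ • K') = K' := by
    rw [smul_smul, mul_inv_cancel₀ ha.ne', one_smul]
  calc dvg (a • K) (a • S) = _ + dvg K S := hd K hKsep
    _ ≤ _ + dvg (a⁻¹ • K') S := by linarith [hmin _ hK'']
    _ = dvg (a • (a⁻¹ • K')) (a • S) := (hd _ hK'').symm
    _ = dvg K' (a • S) := by rw [hre]
end

section
/- (Proposition 5, item 1.) Let Σ be a p×p real matrix (indexed by pairs), and let A = A2 ⊛ A1, H = H2 ⊛ H1, and H̃ = H̃2 ⊛ H̃1 be separable matrices with all factors A1, H1, H̃1 (p1×p1) and A2, H2, H̃2 (p2×p2) invertible. If H̃ H̃ᵀ = A H Hᵀ Aᵀ, then there exist an orthogonal p1×p1 matrix R1 and an orthogonal p2×p2 matrix R2 such that, with R = R2 ⊛ R1, H̃⁻¹ (A Σ Aᵀ) H̃⁻ᵀ = R (H⁻¹ Σ H⁻ᵀ) Rᵀ. -/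
open Matrix BigOperators Filter

lemma sep_mul' {p1 p2 : ℕ} (M1 N1 : Matrix (Fin p1) (Fin p1) ℝ)
    (M2 N2 : Matrix (Fin p2) (Fin p2) ℝ) :
    sep M1 M2 * sep N1 N2 = sep (M1 * N1) (M2 * N2) := by
  ext x y
  simp only [sep, Matrix.mul_apply]
  rw [Finset.sum_mul_sum, Fintype.sum_prod_type]
  refine Finset.sum_congr rfl fun a _ => Finset.sum_congr rfl fun b _ => ?_
  ring

lemma sep_one' {p1 p2 : ℕ} :
    sep (1 : Matrix (Fin p1) (Fin p1) ℝ) (1 : Matrix (Fin p2) (Fin p2) ℝ) = 1 := by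
  ext x y
  simp only [sep, Matrix.one_apply, Prod.ext_iff]
  by_cases h1 : x.1 = y.1 <;> by_cases h2 : x.2 = y.2 <;> simp [h1, h2]

lemma sep_transpose' {p1 p2 : ℕ} (M1 : Matrix (Fin p1) (Fin p1) ℝ)
    (M2 : Matrix (Fin p2) (Fin p2) ℝ) : (sep M1 M2)ᵀ = sep M1ᵀ M2ᵀ := by
  ext x y; simp [sep, Matrix.transpose_apply]

lemma sep_smul' {p1 p2 : ℕ} (a b : ℝ) (M1 : Matrix (Fin p1) (Fin p1) ℝ)
    (M2 : Matrix (Fin p2) (Fin p2) ℝ) :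
    sep (a • M1) (b • M2) = (a * b) • sep M1 M2 := by
  ext x y; simp [sep, smul_eq_mul]; ring

lemma sep_isUnit_det {p1 p2 : ℕ} {M1 : Matrix (Fin p1) (Fin p1) ℝ}
    {M2 : Matrix (Fin p2) (Fin p2) ℝ} (h1 : IsUnit M1.det) (h2 : IsUnit M2.det) :
    IsUnit (sep M1 M2).det := by
  apply Matrix.isUnit_det_of_left_inverse (B := sep M1⁻¹ M2⁻¹)
  rw [sep_mul', Matrix.nonsing_inv_mul _ h1, Matrix.nonsing_inv_mul _ h2, sep_one']

lemma sep_inv' {p1 p2 : ℕ} {M1 : Matrix (Fin p1) (Fin p1) ℝ}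
    {M2 : Matrix (Fin p2) (Fin p2) ℝ} (h1 : IsUnit M1.det) (h2 : IsUnit M2.det) :
    (sep M1 M2)⁻¹ = sep M1⁻¹ M2⁻¹ := by
  apply Matrix.inv_eq_left_inv
  rw [sep_mul', Matrix.nonsing_inv_mul _ h1, Matrix.nonsing_inv_mul _ h2, sep_one']

theorem stmt13 (p1 p2 : ℕ) (hp1 : 0 < p1) (hp2 : 0 < p2)
    (S : Matrix (Fin p1 × Fin p2) (Fin p1 × Fin p2) ℝ)
    (A1 : Matrix (Fin p1) (Fin p1) ℝ) (A2 : Matrix (Fin p2) (Fin p2) ℝ)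
    (H1 : Matrix (Fin p1) (Fin p1) ℝ) (H2 : Matrix (Fin p2) (Fin p2) ℝ)
    (Ht1 : Matrix (Fin p1) (Fin p1) ℝ) (Ht2 : Matrix (Fin p2) (Fin p2) ℝ)
    (hA1 : IsUnit A1.det) (hA2 : IsUnit A2.det)
    (hH1 : IsUnit H1.det) (hH2 : IsUnit H2.det)
    (hHt1 : IsUnit Ht1.det) (hHt2 : IsUnit Ht2.det)
    (hcross : sep Ht1 Ht2 * (sep Ht1 Ht2)ᵀ =
      sep A1 A2 * (sep H1 H2 * (sep H1 H2)ᵀ) * (sep A1 A2)ᵀ) :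
    ∃ (R1 : Matrix (Fin p1) (Fin p1) ℝ) (R2 : Matrix (Fin p2) (Fin p2) ℝ),
      R1 * R1ᵀ = 1 ∧ R2 * R2ᵀ = 1 ∧
      (sep Ht1 Ht2)⁻¹ * (sep A1 A2 * S * (sep A1 A2)ᵀ) * ((sep Ht1 Ht2)⁻¹)ᵀ =
        sep R1 R2 * ((sep H1 H2)⁻¹ * S * ((sep H1 H2)⁻¹)ᵀ) * (sep R1 R2)ᵀ := by
  set G1 : Matrix (Fin p1) (Fin p1) ℝ := Ht1⁻¹ * A1 * H1 with hG1
  set G2 : Matrix (Fin p2) (Fin p2) ℝ := Ht2⁻¹ * A2 * H2 with hG2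
  set T : Matrix (Fin p1 × Fin p2) (Fin p1 × Fin p2) ℝ := sep Ht1 Ht2 with hT
  set X : Matrix (Fin p1 × Fin p2) (Fin p1 × Fin p2) ℝ := sep A1 A2 with hX
  set Hm : Matrix (Fin p1 × Fin p2) (Fin p1 × Fin p2) ℝ := sep H1 H2 with hHm
  have hTdet : IsUnit T.det := sep_isUnit_det hHt1 hHt2
  have hHdet : IsUnit Hm.det := sep_isUnit_det hH1 hH2
  have hsepG : sep G1 G2 = T⁻¹ * X * Hm := by
    rw [hT, hX, hHm, sep_inv' hHt1 hHt2, sep_mul', sep_mul']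
  -- sep G1 G2 is orthogonal
  have hGG : sep G1 G2 * (sep G1 G2)ᵀ = 1 := by
    rw [hsepG, Matrix.transpose_mul, Matrix.transpose_mul]
    calc T⁻¹ * X * Hm * (Hmᵀ * (Xᵀ * (T⁻¹)ᵀ))
        = T⁻¹ * (X * (Hm * Hmᵀ) * Xᵀ) * (T⁻¹)ᵀ := by
          simp only [Matrix.mul_assoc]
      _ = T⁻¹ * (T * Tᵀ) * (T⁻¹)ᵀ := by rw [← hcross]
      _ = (T⁻¹ * T) * (Tᵀ * (Tᵀ)⁻¹) := by
          rw [Matrix.transpose_nonsing_inv]; simp only [Matrix.mul_assoc]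
      _ = 1 := by
          rw [Matrix.nonsing_inv_mul _ hTdet,
            Matrix.mul_nonsing_inv _ ((Matrix.det_transpose T) ▸ hTdet),
            Matrix.one_mul]
  have hMN : sep (G1 * G1ᵀ) (G2 * G2ᵀ) = 1 := by
    rw [← sep_mul', ← sep_transpose', hGG]
  set M : Matrix (Fin p1) (Fin p1) ℝ := G1 * G1ᵀ with hM
  set N : Matrix (Fin p2) (Fin p2) ℝ := G2 * G2ᵀ with hN
  have hentry : ∀ (i i' : Fin p1) (j j' : Fin p2),
      M i i' * N j j' = if i = i' ∧ j = j' then 1 else 0 := by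
    intro i i' j j'
    have := congr_fun (congr_fun hMN (i, j)) (i', j')
    simpa [sep, Matrix.one_apply, Prod.ext_iff] using this
  have i0 : Fin p1 := ⟨0, hp1⟩
  have j0 : Fin p2 := ⟨0, hp2⟩
  set c : ℝ := N j0 j0 with hc
  set d : ℝ := M i0 i0 with hd
  have hdc : d * c = 1 := by simpa using hentry i0 i0 j0 j0
  have hd0 : 0 ≤ d := by
    rw [hd, hM]
    have : (G1 * G1ᵀ) i0 i0 = ∑ k, G1 i0 k * G1 i0 k := by
      simp [Matrix.mul_apply]
    rw [this]
    exact Finset.sum_nonneg fun k _ => mul_self_nonneg _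
  have hdpos : 0 < d := lt_of_le_of_ne hd0 (by
    intro h; rw [← h] at hdc; simp at hdc)
  have hcpos : 0 < c := by
    by_contra h
    push_neg at h
    nlinarith
  have hcM : c • M = 1 := by
    ext i i'
    have := hentry i i' j0 j0
    simp only [and_true] at this
    simp [Matrix.one_apply, mul_comm, this]
    exact this
  have hdN : d • N = 1 := by
    ext j j'
    have := hentry i0 i0 j j'
    simp only [true_and] at this
    simp [Matrix.one_apply, mul_comm, this]
    exact this
  refine ⟨Real.sqrt c • G1, Real.sqrt d • G2, ?_, ?_, ?_⟩
  · rw [Matrix.transpose_smul, Matrix.smul_mul, Matrix.mul_smul, smul_smul,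
      Real.mul_self_sqrt hcpos.le, ← hM, hcM]
  · rw [Matrix.transpose_smul, Matrix.smul_mul, Matrix.mul_smul, smul_smul,
      Real.mul_self_sqrt hdpos.le, ← hN, hdN]
  · have hsep : sep (Real.sqrt c • G1) (Real.sqrt d • G2) = sep G1 G2 := by
      rw [sep_smul', ← Real.sqrt_mul hcpos.le, mul_comm c d, hdc, Real.sqrt_one, one_smul]
    rw [hsep, hsepG]
    have hkey : Hm * (Hm⁻¹ * S * (Hm⁻¹)ᵀ) * Hmᵀ = S := by
      rw [Matrix.transpose_nonsing_inv]
      calc Hm * (Hm⁻¹ * S * (Hmᵀ)⁻¹) * Hmᵀ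
          = (Hm * Hm⁻¹) * S * ((Hmᵀ)⁻¹ * Hmᵀ) := by simp only [Matrix.mul_assoc]
        _ = S := by
            rw [Matrix.mul_nonsing_inv _ hHdet,
              Matrix.nonsing_inv_mul _ ((Matrix.det_transpose Hm) ▸ hHdet),
              Matrix.one_mul, Matrix.mul_one]
    calc T⁻¹ * (X * S * Xᵀ) * (T⁻¹)ᵀ
        = T⁻¹ * (X * (Hm * (Hm⁻¹ * S * (Hm⁻¹)ᵀ) * Hmᵀ) * Xᵀ) * (T⁻¹)ᵀ := by rw [hkey]
      _ = T⁻¹ * X * Hm * (Hm⁻¹ * S * (Hm⁻¹)ᵀ) * (T⁻¹ * X * Hm)ᵀ := by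
          simp only [Matrix.transpose_mul, Matrix.mul_assoc]
end
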